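/- arXiv:1212.6100 — 2 statements merged into one kernel-verified Lean document; each statement's English description precedes it below -/
import Mathlib

section
/- For every locally bounded Borel measurable V : ℝ^d → ℝ with ∫ e^{−V(x)} dx < ∞, the super Poincaré inequality for 𝓓_{α,V} fails for every rate function: there is no function β : (0,∞) → (0,∞) such that μ_V(f²) ≤ s · 𝓓_{α,V}(f,f) + β(s) · μ_V(|f|)² holds for all s > 0 and all f ∈ C_b^∞(ℝ^d). -/
open MeasureTheory Real Set Metric Filter

noncomputable section

/-- Euclidean space `ℝ^d`. -/
abbrev Ed (d : ℕ) := EuclideanSpace ℝ (Fin d)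

/-- The probability measure `μ_V(dx) = C_V e^{-V(x)} dx` with `C_V = (∫ e^{-V})⁻¹`. -/
def muV (d : ℕ) (V : Ed d → ℝ) : Measure (Ed d) :=
  (volume : Measure (Ed d)).withDensity
    fun x => ENNReal.ofReal ((∫ y, Real.exp (-V y))⁻¹ * Real.exp (-V x))

/-- `f ∈ C_b^∞(ℝ^d)`: smooth with bounded derivatives of every order. -/
def CbSmooth (d : ℕ) (f : Ed d → ℝ) : Prop :=
  ContDiff ℝ (⊤ : ℕ∞) f ∧ ∀ n : ℕ, ∃ C : ℝ, ∀ x, ‖iteratedFDeriv ℝ n f x‖ ≤ C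

/-- `V` is locally bounded. -/
def LocallyBounded (d : ℕ) (V : Ed d → ℝ) : Prop :=
  ∀ r : ℝ, ∃ M : ℝ, ∀ x : Ed d, ‖x‖ ≤ r → |V x| ≤ M

/-- The nonlocal Dirichlet form with finite range jumps `𝓔_{α,V}`. -/
def formE (d : ℕ) (α : ℝ) (V f : Ed d → ℝ) : ℝ :=
  (1/2) * ∫ x, (∫ y in {y : Ed d | dist x y ≤ 1},
      (f x - f y) ^ 2 / dist x y ^ ((d : ℝ) + α)) ∂(muV d V)

/-- The nonlocal Dirichlet form with large jumps `𝓓_{α,V}`. -/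
def formD (d : ℕ) (α : ℝ) (V f : Ed d → ℝ) : ℝ :=
  (1/2) * ∫ x, (∫ y in {y : Ed d | 1 < dist x y},
      (f x - f y) ^ 2 / dist x y ^ ((d : ℝ) + α)) ∂(muV d V)

/-- `inf_{z : |x|-1 ≤ |z| ≤ |x|-1/2} e^{-V(z)}`. -/
def infAnn (d : ℕ) (V : Ed d → ℝ) (x : Ed d) : ℝ :=
  sInf ((fun z => Real.exp (-V z)) '' {z : Ed d | ‖x‖ - 1 ≤ ‖z‖ ∧ ‖z‖ ≤ ‖x‖ - 1/2})

/-- `sup_{z : |x| ≤ |z| ≤ |x|+1} e^{-V(z)}`. -/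
def supAnn (d : ℕ) (V : Ed d → ℝ) (x : Ed d) : ℝ :=
  sSup ((fun z => Real.exp (-V z)) '' {z : Ed d | ‖x‖ ≤ ‖z‖ ∧ ‖z‖ ≤ ‖x‖ + 1})

/-- `K(r) = sup_{|x| ≤ r} e^{-V(x)}`. -/
def Kfun (d : ℕ) (V : Ed d → ℝ) (r : ℝ) : ℝ :=
  sSup ((fun x => Real.exp (-V x)) '' {x : Ed d | ‖x‖ ≤ r})

/-- `k(r) = inf_{|x| ≤ r+1} e^{-V(x)}`. -/
def kfun (d : ℕ) (V : Ed d → ℝ) (r : ℝ) : ℝ :=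
  sInf ((fun x => Real.exp (-V x)) '' {x : Ed d | ‖x‖ ≤ r + 1})

/-- The constant `(1/α)·2^{2d+1}·(e + e^{1/2})·(2^α − 1)`. -/
def thresholdConst (d : ℕ) (α : ℝ) : ℝ :=
  (1/α) * (2:ℝ) ^ (2*d+1) * (Real.exp 1 + Real.exp (1/2)) * ((2:ℝ) ^ α - 1)

set_option maxHeartbeats 1000000 in
/-- for every locally bounded `V`, the super Poincaré inequality for the
large-jump Dirichlet form `𝓓_{α,V}` fails for every rate function `β`. -/
theorem no_super_poincare_large_jumps
    (d : ℕ) (hd : 1 ≤ d) (α : ℝ) (hα : 0 < α ∧ α < 2)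
    (V : Ed d → ℝ) (hVmeas : Measurable V) (hVloc : LocallyBounded d V)
    (hVint : Integrable (fun x => Real.exp (-V x)))
    (β : ℝ → ℝ) (hβ : ∀ s : ℝ, 0 < s → 0 < β s) :
    ¬ (∀ s : ℝ, 0 < s → ∀ f : Ed d → ℝ, CbSmooth d f →
      ∫ x, (f x) ^ 2 ∂(muV d V) ≤ s * formD d α V f +
        β s * (∫ x, |f x| ∂(muV d V)) ^ 2) := by
  intro H
  obtain ⟨hα1, -⟩ := hα
  haveI : Nonempty (Fin d) := Fin.pos_iff_nonempty.mp hd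
  haveI : Nontrivial (Ed d) := inferInstance
  haveI : NeZero (volume : Measure (Ed d)) := by
    constructor
    intro h
    have h1 : (0:ENNReal) < volume (ball (0 : Ed d) 1) := measure_ball_pos _ _ one_pos
    rw [h] at h1; simp at h1
  set I : ℝ := ∫ y, Real.exp (-V y) with hIdef
  have hI : 0 < I := integral_exp_pos hVint
  obtain ⟨M, hM⟩ := hVloc 1
  set ρp : ℝ := I⁻¹ * Real.exp M with hρpdef
  set ρm : ℝ := I⁻¹ * Real.exp (-M) with hρmdef
  have hρp : 0 < ρp := mul_pos (inv_pos.mpr hI) (Real.exp_pos _)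
  have hρm : 0 < ρm := mul_pos (inv_pos.mpr hI) (Real.exp_pos _)
  -- density measurability
  have hdensmeas : Measurable fun x : Ed d => ENNReal.ofReal (I⁻¹ * Real.exp (-V x)) :=
    (measurable_const.mul (hVmeas.neg.exp)).ennreal_ofReal
  -- muV is a probability measure
  haveI hprob : IsProbabilityMeasure (muV d V) := by
    constructor
    rw [muV, withDensity_apply _ MeasurableSet.univ, Measure.restrict_univ]
    simp only [← hIdef]
    rw [← ofReal_integral_eq_lintegral_ofReal (hVint.const_mul I⁻¹)
      (ae_of_all _ fun x => mul_nonneg (inv_nonneg.mpr hI.le) (Real.exp_nonneg _))]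
    rw [integral_const_mul, ← hIdef, inv_mul_cancel₀ hI.ne', ENNReal.ofReal_one]
  -- measure bounds for subsets of the unit ball
  have hmeasA : ∀ A : Set (Ed d), MeasurableSet A → A ⊆ ball (0:Ed d) 1 →
      ENNReal.ofReal ρm * volume A ≤ muV d V A ∧
      muV d V A ≤ ENNReal.ofReal ρp * volume A := by
    intro A hA hsub
    have hpt : ∀ x : Ed d, x ∈ A →
        ENNReal.ofReal ρm ≤ ENNReal.ofReal (I⁻¹ * Real.exp (-V x)) ∧
        ENNReal.ofReal (I⁻¹ * Real.exp (-V x)) ≤ ENNReal.ofReal ρp := by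
      intro x hx
      have hx1 : ‖x‖ ≤ 1 := (mem_ball_zero_iff.mp (hsub hx)).le
      obtain ⟨hV1, hV2⟩ := abs_le.mp (hM x hx1)
      constructor
      · apply ENNReal.ofReal_le_ofReal
        rw [hρmdef]
        exact mul_le_mul_of_nonneg_left (Real.exp_le_exp.mpr (by linarith)) (inv_nonneg.mpr hI.le)
      · apply ENNReal.ofReal_le_ofReal
        rw [hρpdef]
        exact mul_le_mul_of_nonneg_left (Real.exp_le_exp.mpr (by linarith)) (inv_nonneg.mpr hI.le)
    constructor
    · rw [muV, withDensity_apply _ hA]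
      simp only [← hIdef]
      calc ENNReal.ofReal ρm * volume A = ∫⁻ _ in A, ENNReal.ofReal ρm ∂volume := by
            rw [setLIntegral_const]
        _ ≤ ∫⁻ x in A, ENNReal.ofReal (I⁻¹ * Real.exp (-V x)) ∂volume :=
            setLIntegral_mono hdensmeas fun x hx => (hpt x hx).1
    · rw [muV, withDensity_apply _ hA]
      simp only [← hIdef]
      calc ∫⁻ x in A, ENNReal.ofReal (I⁻¹ * Real.exp (-V x)) ∂volume
          ≤ ∫⁻ _ in A, ENNReal.ofReal ρp ∂volume :=
            setLIntegral_mono measurable_const fun x hx => (hpt x hx).2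
        _ = ENNReal.ofReal ρp * volume A := by rw [setLIntegral_const]
  -- the japanese bracket constant
  have hjap : Integrable (fun z : Ed d => (1 + ‖z‖) ^ (-((d:ℝ)+α))) := by
    apply integrable_one_add_norm
    rw [finrank_euclideanSpace_fin]
    linarith
  set c₂ : ℝ := ∫ z : Ed d, (1 + ‖z‖) ^ (-((d:ℝ)+α)) with hc₂def
  have hc₂0 : 0 ≤ c₂ :=
    integral_nonneg fun z => Real.rpow_nonneg (by positivity) _
  have hrr0 : (0:ℝ) < (d:ℝ) + α := add_pos_of_nonneg_of_pos (Nat.cast_nonneg d) hα1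
  -- the constants
  set K : ℝ := (2:ℝ) ^ ((d:ℝ)+α) * c₂ * ρp + 1 with hKdef
  have hK : 0 < K := by
    have : 0 ≤ (2:ℝ) ^ ((d:ℝ)+α) * c₂ * ρp :=
      mul_nonneg (mul_nonneg (Real.rpow_nonneg (by norm_num) _) hc₂0) hρp.le
    linarith
  set s : ℝ := ρm / (2^(d+1) * K) with hsdef
  have hs : 0 < s := div_pos hρm (mul_pos (by positivity) hK)
  have hβs : 0 < β s := hβ s hs
  set B1 : ℝ := (volume (ball (0:Ed d) 1)).toReal with hB1def
  have hB1 : 0 < B1 :=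
    ENNReal.toReal_pos (measure_ball_pos _ _ one_pos).ne' measure_ball_lt_top.ne
  set T : ℝ := β s * ρp^2 * 2^d * 2^d * B1 with hTdef
  have hT : 0 < T :=
    mul_pos (mul_pos (mul_pos (mul_pos hβs (pow_pos hρp 2)) (by positivity)) (by positivity)) hB1
  set δ : ℝ := min (1/2) (ρm / (4*T)) with hδdef
  have hδ0 : 0 < δ := lt_min (by norm_num) (div_pos hρm (by linarith))
  have hδhalf : δ ≤ 1/2 := min_le_left _ _
  have hδT : T * δ ≤ ρm/4 := by
    have h1 : δ ≤ ρm/(4*T) := min_le_right _ _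
    calc T * δ ≤ T * (ρm/(4*T)) := mul_le_mul_of_nonneg_left h1 hT.le
      _ = ρm/4 := by field_simp
  -- the bump function
  set F : ContDiffBump (0 : Ed d) := ⟨δ, 2*δ, hδ0, by linarith⟩ with hFdef
  have hrIn : F.rIn = δ := rfl
  have hrOut : F.rOut = 2*δ := rfl
  have hCb : CbSmooth d (⇑F) := by
    refine ⟨F.contDiff, fun n => ?_⟩
    have hc : Continuous (iteratedFDeriv ℝ n (⇑F)) :=
      (F.contDiff (n := (⊤ : ℕ∞))).continuous_iteratedFDeriv (by exact_mod_cast le_top)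
    exact hc.bounded_above_of_compact_support (F.hasCompactSupport.iteratedFDeriv n)
  -- volumes
  set vδ : ℝ := (volume (ball (0:Ed d) δ)).toReal with hvδdef
  set v2 : ℝ := (volume (ball (0:Ed d) (2*δ))).toReal with hv2def
  have hvδpos : 0 < vδ :=
    ENNReal.toReal_pos (measure_ball_pos _ _ hδ0).ne' measure_ball_lt_top.ne
  have hball2 : volume (ball (0:Ed d) (2*δ)) =
      ENNReal.ofReal ((2:ℝ)^d) * volume (ball (0:Ed d) δ) := by
    have h := Measure.addHaar_ball_mul_of_pos (volume : Measure (Ed d)) (0:Ed d) two_pos δ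
    rwa [finrank_euclideanSpace_fin] at h
  have hv2 : v2 = 2^d * vδ := by
    rw [hv2def, hball2, ENNReal.toReal_mul, ENNReal.toReal_ofReal (by positivity), hvδdef]
  have hballδ : volume (ball (0:Ed d) δ) =
      ENNReal.ofReal (δ^d) * volume (ball (0:Ed d) 1) := by
    have h := Measure.addHaar_ball_of_pos (volume : Measure (Ed d)) (0:Ed d) hδ0
    rwa [finrank_euclideanSpace_fin] at h
  have hvδval : vδ = δ^d * B1 := by
    rw [hvδdef, hballδ, ENNReal.toReal_mul, ENNReal.toReal_ofReal (by positivity), hB1def]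
  -- measure bounds
  have hsubδ : closedBall (0:Ed d) δ ⊆ ball (0:Ed d) 1 :=
    closedBall_subset_ball (by linarith)
  have hsub2 : ball (0:Ed d) (2*δ) ⊆ ball (0:Ed d) 1 :=
    ball_subset_ball (by linarith)
  have hlowμ : ρm * vδ ≤ (muV d V (closedBall (0:Ed d) δ)).toReal := by
    have h1 := (hmeasA _ measurableSet_closedBall hsubδ).1
    have h2 : ENNReal.ofReal ρm * volume (ball (0:Ed d) δ) ≤ muV d V (closedBall (0:Ed d) δ) :=
      le_trans (mul_le_mul_right (measure_mono ball_subset_closedBall) _) h1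
    have h3 := ENNReal.toReal_mono (measure_ne_top _ _) h2
    rwa [ENNReal.toReal_mul, ENNReal.toReal_ofReal hρm.le, ← hvδdef] at h3
  have hupμ : (muV d V (ball (0:Ed d) (2*δ))).toReal ≤ ρp * v2 := by
    have h1 := (hmeasA _ measurableSet_ball hsub2).2
    have h3 := ENNReal.toReal_mono
      (ENNReal.mul_ne_top ENNReal.ofReal_ne_top measure_ball_lt_top.ne) h1
    rwa [ENNReal.toReal_mul, ENNReal.toReal_ofReal hρp.le, ← hv2def] at h3
  -- integrability over muV
  have hFcont : Continuous (⇑F) := F.continuous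
  have hf2μint : Integrable (fun x => (F x) ^ 2) (muV d V) := by
    refine (integrable_const (1:ℝ)).mono' ((hFcont.pow 2).aestronglyMeasurable)
      (ae_of_all _ fun x => ?_)
    rw [Real.norm_eq_abs, abs_of_nonneg (sq_nonneg _)]
    nlinarith [F.nonneg (x := x), F.le_one (x := x)]
  have hfabsμint : Integrable (fun x => |F x|) (muV d V) := (integrable_const (1:ℝ)).mono'
    (hFcont.abs.aestronglyMeasurable) (ae_of_all _ fun x => by
      rw [Real.norm_eq_abs, abs_abs, abs_of_nonneg (F.nonneg (x := x))]
      exact F.le_one)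
  -- pointwise indicator bounds
  have hindlef2 : ∀ x, (F x) ^ 2 ≤ (ball (0:Ed d) (2*δ)).indicator (fun _ => (1:ℝ)) x := by
    intro x
    by_cases hx : x ∈ ball (0:Ed d) (2*δ)
    · rw [indicator_of_mem hx]
      nlinarith [F.nonneg (x := x), F.le_one (x := x)]
    · rw [indicator_of_notMem hx]
      have hfx : F x = 0 := by
        apply F.zero_of_le_dist
        rw [hrOut]
        exact le_of_not_gt fun h => hx (mem_ball.mpr h)
      simp [hfx]
  have hindleabs : ∀ x, |F x| ≤ (ball (0:Ed d) (2*δ)).indicator (fun _ => (1:ℝ)) x := by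
    intro x
    by_cases hx : x ∈ ball (0:Ed d) (2*δ)
    · rw [indicator_of_mem hx, abs_of_nonneg (F.nonneg (x := x))]
      exact F.le_one
    · rw [indicator_of_notMem hx]
      have hfx : F x = 0 := by
        apply F.zero_of_le_dist
        rw [hrOut]
        exact le_of_not_gt fun h => hx (mem_ball.mpr h)
      simp [hfx]
  -- L²(μ) bounds
  set J2 : ℝ := ∫ x, (F x) ^ 2 ∂(muV d V) with hJ2def
  set J1 : ℝ := ∫ x, |F x| ∂(muV d V) with hJ1def
  have hJ2low : ρm * vδ ≤ J2 := by
    have e1 : ∫ _ in closedBall (0:Ed d) δ, (1:ℝ) ∂(muV d V)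
        = (muV d V (closedBall (0:Ed d) δ)).toReal := by
      rw [setIntegral_const, smul_eq_mul, mul_one, measureReal_def]
    have e2 : ∫ _ in closedBall (0:Ed d) δ, (1:ℝ) ∂(muV d V)
        ≤ ∫ x in closedBall (0:Ed d) δ, (F x) ^ 2 ∂(muV d V) := by
      refine setIntegral_mono_on ((integrableOn_const_iff).mpr (Or.inr (measure_lt_top _ _)))
        hf2μint.integrableOn measurableSet_closedBall fun x hx => ?_
      have : F x = 1 := F.one_of_mem_closedBall (by rwa [hrIn])
      rw [this]; norm_num
    have e3 : ∫ x in closedBall (0:Ed d) δ, (F x) ^ 2 ∂(muV d V) ≤ J2 :=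
      setIntegral_le_integral hf2μint (ae_of_all _ fun x => sq_nonneg _)
    linarith only [hlowμ, e1, e2, e3]
  have hindint : Integrable ((ball (0:Ed d) (2*δ)).indicator fun _ => (1:ℝ)) (muV d V) :=
    (integrable_const 1).indicator measurableSet_ball
  have hJ2up : J2 ≤ (muV d V (ball (0:Ed d) (2*δ))).toReal := by
    have h := integral_mono hf2μint hindint hindlef2
    rwa [integral_indicator_const _ measurableSet_ball, smul_eq_mul, mul_one] at h
  have hJ1up : J1 ≤ (muV d V (ball (0:Ed d) (2*δ))).toReal := by
    have h := integral_mono hfabsμint hindint hindleabs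
    rwa [integral_indicator_const _ measurableSet_ball, smul_eq_mul, mul_one] at h
  have hJ1nonneg : 0 ≤ J1 := integral_nonneg fun x => abs_nonneg _
  -- Lebesgue L² of f
  have hf2Leb : Integrable (fun y => (F y) ^ 2) (volume : Measure (Ed d)) := by
    have hcs : HasCompactSupport (fun y : Ed d => (F y) ^ 2) := by
      have := F.hasCompactSupport.comp_left (g := fun t : ℝ => t ^ 2) (by norm_num)
      simpa [Function.comp_def] using this
    exact (hFcont.pow 2).integrable_of_hasCompactSupport hcs
  set W2 : ℝ := ∫ y, (F y) ^ 2 ∂(volume : Measure (Ed d)) with hW2def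
  have hW2up : W2 ≤ v2 := by
    have hind : Integrable ((ball (0:Ed d) (2*δ)).indicator fun _ => (1:ℝ))
        (volume : Measure (Ed d)) :=
      (integrable_indicator_iff measurableSet_ball).mpr
        ((integrableOn_const_iff).mpr (Or.inr measure_ball_lt_top))
    have h := integral_mono hf2Leb hind hindlef2
    rwa [integral_indicator_const _ measurableSet_ball, smul_eq_mul, mul_one, measureReal_def, ← hv2def] at h
  -- pointwise bound on the inner integrand
  have hptin : ∀ x y : Ed d, 1 < dist x y →
      (F x - F y)^2 / dist x y ^ ((d:ℝ)+α) ≤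
      (2 * (F x)^2 * 2 ^ ((d:ℝ)+α)) * (1 + ‖y - x‖) ^ (-((d:ℝ)+α)) + 2 * (F y)^2 := by
    intro x y hy
    have hd0 : (0:ℝ) < dist x y := lt_trans one_pos hy
    have hD1 : (1:ℝ) ≤ dist x y ^ ((d:ℝ)+α) := Real.one_le_rpow hy.le hrr0.le
    have hDpos : (0:ℝ) < dist x y ^ ((d:ℝ)+α) := lt_of_lt_of_le one_pos hD1
    have hnorm' : ‖y - x‖ = dist x y := (dist_eq_norm' x y).symm
    have h2pos : (0:ℝ) < 1 + dist x y := by linarith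
    have hA : (0:ℝ) < (1 + dist x y) ^ ((d:ℝ)+α) := Real.rpow_pos_of_pos h2pos _
    have hkey : (1 + dist x y) ^ ((d:ℝ)+α) ≤ 2 ^ ((d:ℝ)+α) * dist x y ^ ((d:ℝ)+α) := by
      have h1 : (1 + dist x y) ^ ((d:ℝ)+α) ≤ (2 * dist x y) ^ ((d:ℝ)+α) :=
        Real.rpow_le_rpow (by linarith) (by linarith) hrr0.le
      rwa [Real.mul_rpow (by norm_num) hd0.le] at h1
    have hsq : (F x - F y)^2 ≤ 2*(F x)^2 + 2*(F y)^2 := by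
      linarith only [sq_nonneg (F x + F y), sq_nonneg (F x - F y)]
    have t1 : (F x - F y)^2 / dist x y ^ ((d:ℝ)+α) ≤
        (2*(F x)^2 + 2*(F y)^2) / dist x y ^ ((d:ℝ)+α) := by gcongr
    have t2 : (2*(F x)^2 + 2*(F y)^2) / dist x y ^ ((d:ℝ)+α)
        = 2*(F x)^2/dist x y ^ ((d:ℝ)+α) + 2*(F y)^2/dist x y ^ ((d:ℝ)+α) := add_div _ _ _
    have t3 : 2*(F y)^2 / dist x y ^ ((d:ℝ)+α) ≤ 2*(F y)^2 :=
      div_le_self (by positivity) hD1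
    have t4 : 2*(F x)^2 / dist x y ^ ((d:ℝ)+α) ≤
        (2 * (F x)^2 * 2 ^ ((d:ℝ)+α)) * (1 + ‖y - x‖) ^ (-((d:ℝ)+α)) := by
      rw [hnorm', Real.rpow_neg h2pos.le, ← div_eq_mul_inv]
      rw [div_le_div_iff₀ hDpos hA]
      calc 2*(F x)^2 * (1 + dist x y) ^ ((d:ℝ)+α)
          ≤ 2*(F x)^2 * (2 ^ ((d:ℝ)+α) * dist x y ^ ((d:ℝ)+α)) :=
            mul_le_mul_of_nonneg_left hkey (by positivity)
        _ = 2*(F x)^2*2 ^ ((d:ℝ)+α) * dist x y ^ ((d:ℝ)+α) := by ring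
    linarith only [t1, t2, t3, t4]
  -- inner integral bound
  have hinner : ∀ x : Ed d,
      (∫ y in {y : Ed d | 1 < dist x y}, (F x - F y)^2 / dist x y ^ ((d:ℝ)+α)) ≤
      2 * 2 ^ ((d:ℝ)+α) * c₂ * (F x)^2 + 2 * W2 := by
    intro x
    have hSmeas : MeasurableSet {y : Ed d | 1 < dist x y} := by
      have hc : Continuous fun y : Ed d => dist x y := continuous_const.dist continuous_id
      exact (isOpen_lt continuous_const hc).measurableSet
    have hjapx : Integrable (fun y : Ed d => (1 + ‖y - x‖) ^ (-((d:ℝ)+α))) :=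
      hjap.comp_sub_right x
    have hBint : Integrable (fun y : Ed d =>
        (2 * (F x)^2 * 2 ^ ((d:ℝ)+α)) * (1 + ‖y - x‖) ^ (-((d:ℝ)+α)) + 2 * (F y)^2) :=
      (hjapx.const_mul _).add (hf2Leb.const_mul 2)
    have hBnn : ∀ y : Ed d, 0 ≤
        (2 * (F x)^2 * 2 ^ ((d:ℝ)+α)) * (1 + ‖y - x‖) ^ (-((d:ℝ)+α)) + 2 * (F y)^2 := by
      intro y
      have h1 : (0:ℝ) ≤ (1 + ‖y - x‖) ^ (-((d:ℝ)+α)) := Real.rpow_nonneg (by positivity) _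
      have h2 : (0:ℝ) ≤ 2 * (F x)^2 * 2 ^ ((d:ℝ)+α) := by positivity
      exact add_nonneg (mul_nonneg h2 h1) (by positivity)
    have step1 : (∫ y in {y : Ed d | 1 < dist x y}, (F x - F y)^2 / dist x y ^ ((d:ℝ)+α)) ≤
        ∫ y in {y : Ed d | 1 < dist x y},
          ((2 * (F x)^2 * 2 ^ ((d:ℝ)+α)) * (1 + ‖y - x‖) ^ (-((d:ℝ)+α)) + 2 * (F y)^2) := by
      refine integral_mono_of_nonneg (ae_of_all _ fun y => ?_) hBint.integrableOn ?_
      · exact div_nonneg (sq_nonneg _) (Real.rpow_nonneg dist_nonneg _)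
      · exact (ae_restrict_iff' hSmeas).2 (ae_of_all _ fun y hy => hptin x y hy)
    have step2 : (∫ y in {y : Ed d | 1 < dist x y},
          ((2 * (F x)^2 * 2 ^ ((d:ℝ)+α)) * (1 + ‖y - x‖) ^ (-((d:ℝ)+α)) + 2 * (F y)^2)) ≤
        ∫ y, ((2 * (F x)^2 * 2 ^ ((d:ℝ)+α)) * (1 + ‖y - x‖) ^ (-((d:ℝ)+α)) + 2 * (F y)^2) :=
      setIntegral_le_integral hBint (ae_of_all _ hBnn)
    have step3 : (∫ y, ((2 * (F x)^2 * 2 ^ ((d:ℝ)+α)) * (1 + ‖y - x‖) ^ (-((d:ℝ)+α)) + 2 * (F y)^2))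
        = (2 * (F x)^2 * 2 ^ ((d:ℝ)+α)) * c₂ + 2 * W2 := by
      rw [integral_add (hjapx.const_mul _) (hf2Leb.const_mul 2), integral_const_mul,
        integral_const_mul]
      have htr : (∫ y : Ed d, (1 + ‖y - x‖) ^ (-((d:ℝ)+α))) = c₂ := by
        rw [hc₂def]
        simpa using integral_sub_right_eq_self (fun z : Ed d => (1 + ‖z‖) ^ (-((d:ℝ)+α))) x
      rw [htr, hW2def]
    refine le_trans (le_trans step1 step2) (le_of_eq ?_)
    rw [step3]; ring
  -- outer integral bound: formD ≤ K * v2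
  have hφint : Integrable (fun x => 2 * 2 ^ ((d:ℝ)+α) * c₂ * (F x)^2 + 2 * W2) (muV d V) :=
    (hf2μint.const_mul _).add (integrable_const _)
  have houter : (∫ x, (∫ y in {y : Ed d | 1 < dist x y},
        (F x - F y)^2 / dist x y ^ ((d:ℝ)+α)) ∂(muV d V)) ≤
      2 * 2 ^ ((d:ℝ)+α) * c₂ * J2 + 2 * W2 := by
    have h1 : (∫ x, (∫ y in {y : Ed d | 1 < dist x y},
          (F x - F y)^2 / dist x y ^ ((d:ℝ)+α)) ∂(muV d V)) ≤
        ∫ x, (2 * 2 ^ ((d:ℝ)+α) * c₂ * (F x)^2 + 2 * W2) ∂(muV d V) := by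
      refine integral_mono_of_nonneg (ae_of_all _ fun x => ?_) hφint (ae_of_all _ hinner)
      exact integral_nonneg fun y => div_nonneg (sq_nonneg _) (Real.rpow_nonneg dist_nonneg _)
    have h2 : (∫ x, (2 * 2 ^ ((d:ℝ)+α) * c₂ * (F x)^2 + 2 * W2) ∂(muV d V))
        = 2 * 2 ^ ((d:ℝ)+α) * c₂ * J2 + 2 * W2 := by
      rw [integral_add (hf2μint.const_mul _) (integrable_const _), integral_const_mul,
        integral_const, measureReal_def, measure_univ, ENNReal.toReal_one, one_smul, hJ2def]
    linarith only [h1, h2]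
  have hJ2v2 : J2 ≤ ρp * v2 := le_trans hJ2up hupμ
  have hformD : formD d α V (⇑F) ≤ K * v2 := by
    rw [formD]
    have hc3 : (0:ℝ) ≤ 2 ^ ((d:ℝ)+α) * c₂ :=
      mul_nonneg (Real.rpow_nonneg (by norm_num) _) hc₂0
    calc (1/2) * ∫ x, (∫ y in {y : Ed d | 1 < dist x y},
          (F x - F y)^2 / dist x y ^ ((d:ℝ)+α)) ∂(muV d V)
        ≤ (1/2) * (2 * 2 ^ ((d:ℝ)+α) * c₂ * J2 + 2 * W2) := by
          apply mul_le_mul_of_nonneg_left houter (by norm_num)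
      _ = 2 ^ ((d:ℝ)+α) * c₂ * J2 + W2 := by ring
      _ ≤ 2 ^ ((d:ℝ)+α) * c₂ * (ρp * v2) + v2 :=
          add_le_add (mul_le_mul_of_nonneg_left hJ2v2 hc3) hW2up
      _ = K * v2 := by rw [hKdef]; ring
  -- apply the super Poincaré inequality
  clear_value W2 J2 J1 F vδ v2 δ T B1 s K c₂ ρp ρm I
  have hH := H s hs (⇑F) hCb
  rw [← hJ2def, ← hJ1def] at hH
  have hbound : J2 ≤ s * (K * v2) + β s * (ρp * v2)^2 := by
    have h1 : s * formD d α V (⇑F) ≤ s * (K * v2) :=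
      mul_le_mul_of_nonneg_left hformD hs.le
    have h2 : J1^2 ≤ (ρp * v2)^2 := by
      apply pow_le_pow_left₀ hJ1nonneg (le_trans hJ1up hupμ)
    have h3 : β s * J1^2 ≤ β s * (ρp * v2)^2 := mul_le_mul_of_nonneg_left h2 hβs.le
    linarith only [hH, h1, h3]
  -- final contradiction
  have hsK : s * K * 2^d = ρm / 2 := by
    rw [hsdef]
    have hKne : K ≠ 0 := hK.ne'
    have h2ne : (2:ℝ)^(d+1) ≠ 0 := by positivity
    field_simp
    rw [pow_succ]
  have hchain : ρm * vδ ≤ s * (K * v2) + β s * (ρp * v2)^2 := le_trans hJ2low hbound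
  rw [hv2] at hchain
  have hchain2 : ρm * vδ ≤ (ρm/2) * vδ + (β s * ρp^2 * 2^d * 2^d * vδ) * vδ := by
    have e1 : s * (K * (2^d * vδ)) = (ρm/2) * vδ := by
      calc s * (K * (2^d * vδ)) = (s * K * 2^d) * vδ := by ring
        _ = (ρm/2) * vδ := by rw [hsK]
    have e2 : β s * (ρp * (2^d * vδ))^2 = (β s * ρp^2 * 2^d * 2^d * vδ) * vδ := by ring
    linarith only [hchain, e1, e2]
  have hdiv : ρm/2 ≤ β s * ρp^2 * 2^d * 2^d * vδ := by
    have h' : (ρm/2) * vδ ≤ (β s * ρp^2 * 2^d * 2^d * vδ) * vδ := by linarith only [hchain2]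
    exact le_of_mul_le_mul_right h' hvδpos
  have hδd : δ^d ≤ δ := by
    have h := pow_le_pow_of_le_one hδ0.le (by linarith : δ ≤ 1) hd
    simpa using h
  have hfin : β s * ρp^2 * 2^d * 2^d * vδ ≤ ρm/4 := by
    have e : β s * ρp^2 * 2^d * 2^d * vδ = T * δ^d := by
      rw [hvδval, hTdef]; ring
    rw [e]
    calc T * δ^d ≤ T * δ := mul_le_mul_of_nonneg_left hδd hT.le
      _ ≤ ρm/4 := hδT
  linarith only [hdiv, hfin, hρm]
end
end

section
/- For every f ∈ C_c^∞(ℝ^d) and every continuous function φ : ℝ^d → ℝ with φ > 0 everywhere, the Lyapunov-type inequality − ∫ f(x)² · (L̃_{α,V}φ(x) / φ(x)) μ_V(dx) ≤ Ẽ_{α,V}(f,f) holds. -/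
open MeasureTheory Real Set Metric Filter

noncomputable section

/-- The generator `L̃_{α,V}` of the truncated Dirichlet form, acting on continuous `φ`. -/
def tildeL (d : ℕ) (α : ℝ) (V φ : Ed d → ℝ) (x : Ed d) : ℝ :=
  (1/2) * ∫ y in {y : Ed d | 1/2 ≤ dist x y ∧ dist x y ≤ 1},
    (φ y - φ x) * (1 + Real.exp (V x - V y)) / dist x y ^ ((d:ℝ) + α)

/-- The truncated Dirichlet form `Ẽ_{α,V}`. -/
def tildeE (d : ℕ) (α : ℝ) (V f : Ed d → ℝ) : ℝ :=
  (1/2) * ∫ x, (∫ y in {y : Ed d | 1/2 ≤ dist x y ∧ dist x y ≤ 1},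
      (f x - f y) ^ 2 / dist x y ^ ((d:ℝ) + α)) ∂(muV d V)

set_option maxHeartbeats 1000000 in
/-- Lyapunov-type inequality
`−∫ f² (L̃_{α,V}φ/φ) dμ_V ≤ Ẽ_{α,V}(f,f)` for `f ∈ C_c^∞` and positive continuous `φ`. -/
theorem lyapunov_type_inequality
    (d : ℕ) (hd : 1 ≤ d) (α : ℝ) (hα : 0 < α ∧ α < 2)
    (V : Ed d → ℝ) (hVmeas : Measurable V) (hVloc : LocallyBounded d V)
    (hVint : Integrable (fun x => Real.exp (-V x)))
    (f : Ed d → ℝ) (hf : ContDiff ℝ (⊤ : ℕ∞) f) (hfc : HasCompactSupport f)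
    (φ : Ed d → ℝ) (hφ : Continuous φ) (hφpos : ∀ x, 0 < φ x) :
    -(∫ x, (f x) ^ 2 * (tildeL d α V φ x / φ x) ∂(muV d V)) ≤ tildeE d α V f := by
  classical
  obtain ⟨hα0, hα2⟩ := hα
  set e : ℝ := (d : ℝ) + α with he
  have hexpnn : (0:ℝ) ≤ e := by positivity
  set C : ℝ := (∫ y, Real.exp (-V y))⁻¹ with hC
  set ρ : Ed d → ℝ := fun x => C * Real.exp (-V x) with hρdef
  have hCnn : 0 ≤ C := inv_nonneg.mpr (integral_nonneg fun y => (Real.exp_pos _).le)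
  have hρnn : ∀ x, 0 ≤ ρ x := fun x => mul_nonneg hCnn (Real.exp_pos _).le
  have hρmeas : Measurable ρ := measurable_const.mul (hVmeas.neg.exp)
  -- integral against muV
  have hμint : ∀ g : Ed d → ℝ, ∫ x, g x ∂(muV d V) = ∫ x, ρ x * g x := by
    intro g
    have h1 : muV d V
        = (volume : Measure (Ed d)).withDensity (fun x => ((ρ x).toNNReal : ENNReal)) := by
      rfl
    rw [h1, integral_withDensity_eq_integral_smul hρmeas.real_toNNReal]
    congr 1; funext x
    rw [NNReal.smul_def, Real.coe_toNNReal _ (hρnn x), smul_eq_mul]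
  -- the symmetric set on the product space
  set S : Set (Ed d × Ed d) := {p | 1/2 ≤ dist p.1 p.2 ∧ dist p.1 p.2 ≤ 1} with hSdef
  have hSmeas : MeasurableSet S := by
    have h1 : IsClosed {p : Ed d × Ed d | 1/2 ≤ dist p.1 p.2} :=
      isClosed_le continuous_const continuous_dist
    have h2 : IsClosed {p : Ed d × Ed d | dist p.1 p.2 ≤ 1} :=
      isClosed_le continuous_dist continuous_const
    exact (h1.inter h2).measurableSet
  have hSswap : ∀ q : Ed d × Ed d, q.swap ∈ S ↔ q ∈ S := by
    intro q
    simp only [hSdef, Set.mem_setOf_eq, Prod.fst_swap, Prod.snd_swap, dist_comm]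
  have hAmeas : ∀ x : Ed d, MeasurableSet {y : Ed d | 1/2 ≤ dist x y ∧ dist x y ≤ 1} := by
    intro x
    have h1 : IsClosed {y : Ed d | 1/2 ≤ dist x y} :=
      isClosed_le continuous_const (continuous_const.dist continuous_id)
    have h2 : IsClosed {y : Ed d | dist x y ≤ 1} :=
      isClosed_le (continuous_const.dist continuous_id) continuous_const
    exact (h1.inter h2).measurableSet
  have hind : ∀ (g : Ed d × Ed d → ℝ) (x : Ed d),
      ∫ y in {y : Ed d | 1/2 ≤ dist x y ∧ dist x y ≤ 1}, g (x, y) = ∫ y, S.indicator g (x, y) := by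
    intro g x
    rw [← integral_indicator (hAmeas x)]
    refine integral_congr_ae (Eventually.of_forall fun y => ?_)
    show {y : Ed d | 1/2 ≤ dist x y ∧ dist x y ≤ 1}.indicator (fun y => g (x, y)) y
      = S.indicator g (x, y)
    by_cases h : 1/2 ≤ dist x y ∧ dist x y ≤ 1
    · have h1 : y ∈ {y : Ed d | 1/2 ≤ dist x y ∧ dist x y ≤ 1} := h
      have h2 : (x, y) ∈ S := h
      rw [Set.indicator_of_mem h1, Set.indicator_of_mem h2]
    · have h1 : y ∉ {y : Ed d | 1/2 ≤ dist x y ∧ dist x y ≤ 1} := h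
      have h2 : (x, y) ∉ S := h
      rw [Set.indicator_of_notMem h1, Set.indicator_of_notMem h2]
  -- the two product-space integrands
  set FL : Ed d × Ed d → ℝ := fun p =>
    f p.1 ^ 2 / φ p.1 * ((φ p.1 - φ p.2) * (ρ p.1 + ρ p.2) / dist p.1 p.2 ^ e) with hFL
  set FE : Ed d × Ed d → ℝ := fun p =>
    ρ p.1 * ((f p.1 - f p.2) ^ 2 / dist p.1 p.2 ^ e) with hFE
  have hfcont : Continuous f := hf.continuous
  -- the exponential identity
  have hexp2 : ∀ x y : Ed d, ρ x * (1 + Real.exp (V x - V y)) = ρ x + ρ y := by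
    intro x y
    have h1 : Real.exp (-V x) * Real.exp (V x - V y) = Real.exp (-V y) := by
      rw [← Real.exp_add]; ring_nf
    simp only [hρdef]
    calc C * Real.exp (-V x) * (1 + Real.exp (V x - V y))
        = C * Real.exp (-V x) + C * (Real.exp (-V x) * Real.exp (V x - V y)) := by ring
      _ = C * Real.exp (-V x) + C * Real.exp (-V y) := by rw [h1]
  -- per-x identity for the LHS
  have hAx : ∀ x : Ed d, -(ρ x * (f x ^ 2 * (tildeL d α V φ x / φ x)))
      = (1/2) * ∫ y, S.indicator FL (x, y) := by
    intro x
    simp only [tildeL, ← he]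
    have hstep : ∀ y : Ed d, ρ x * (f x ^ 2 / φ x) *
        -((φ y - φ x) * (1 + Real.exp (V x - V y)) / dist x y ^ e) = FL (x, y) := by
      intro y
      simp only [hFL]
      rw [← hexp2 x y]
      ring
    have h2 : ∫ y in {y : Ed d | 1/2 ≤ dist x y ∧ dist x y ≤ 1},
        ρ x * (f x ^ 2 / φ x) *
          -((φ y - φ x) * (1 + Real.exp (V x - V y)) / dist x y ^ e)
        = ∫ y, S.indicator FL (x, y) := by
      rw [← hind FL x]
      exact integral_congr_ae (Eventually.of_forall fun y => hstep y)
    rw [← h2, integral_const_mul, integral_neg]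
    ring
  -- per-x identity for the RHS
  have hEx : ∀ x : Ed d, ρ x * (∫ y in {y : Ed d | 1/2 ≤ dist x y ∧ dist x y ≤ 1},
      (f x - f y) ^ 2 / dist x y ^ e) = ∫ y, S.indicator FE (x, y) := by
    intro x
    rw [← hind FE x, ← integral_const_mul]
  -- bounds for integrability
  obtain ⟨R₀, hR₀⟩ := (isBounded_iff_subset_closedBall 0).1 hfc.isBounded
  set R : ℝ := max R₀ 0 with hR
  have hRnn : (0:ℝ) ≤ R := le_max_right _ _
  have hKR : tsupport f ⊆ closedBall 0 R := hR₀.trans (closedBall_subset_closedBall (le_max_left _ _))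
  obtain ⟨Mf, hMf⟩ : ∃ Mf : ℝ, ∀ x, |f x| ≤ Mf := by
    obtain ⟨Mf, hMf⟩ := (isCompact_closedBall (0 : Ed d) R).exists_bound_of_continuousOn
      hfcont.continuousOn
    refine ⟨max Mf 0, fun x => ?_⟩
    by_cases hx : x ∈ tsupport f
    · exact le_trans (hMf x (hKR hx)) (le_max_left _ _)
    · rw [image_eq_zero_of_notMem_tsupport hx, abs_zero]; exact le_max_right _ _
  have hMfnn : 0 ≤ Mf := (abs_nonneg _).trans (hMf 0)
  obtain ⟨Mφ, hMφ⟩ := (isCompact_closedBall (0 : Ed d) (R + 1)).exists_bound_of_continuousOn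
    hφ.continuousOn
  have h0mem : (0 : Ed d) ∈ closedBall (0 : Ed d) (R + 1) := by
    simp [mem_closedBall]; positivity
  have hMφnn : 0 ≤ Mφ := (abs_nonneg _).trans (hMφ 0 h0mem)
  obtain ⟨x₀, hx₀mem, hx₀min⟩ := (isCompact_closedBall (0 : Ed d) (R + 1)).exists_isMinOn
    ⟨0, h0mem⟩ hφ.continuousOn
  set mφ : ℝ := φ x₀ with hmφ
  have hmφpos : 0 < mφ := hφpos x₀
  have hmφle : ∀ x ∈ closedBall (0 : Ed d) (R + 1), mφ ≤ φ x := fun x hx => hx₀min hx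
  obtain ⟨MV, hMV⟩ := hVloc (R + 1)
  set Mρ : ℝ := C * Real.exp MV with hMρ
  have hMρnn : 0 ≤ Mρ := mul_nonneg hCnn (Real.exp_pos _).le
  have hρbound : ∀ z : Ed d, ‖z‖ ≤ R + 1 → ρ z ≤ Mρ := by
    intro z hz
    have h1 : -V z ≤ MV := (neg_le_abs _).trans (hMV z hz)
    exact mul_le_mul_of_nonneg_left (Real.exp_le_exp.mpr h1) hCnn
  have hkerlb : ∀ p : Ed d × Ed d, p ∈ S → ((2:ℝ)⁻¹) ^ e ≤ dist p.1 p.2 ^ e := by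
    intro p hp
    exact Real.rpow_le_rpow (by norm_num) (by simpa using hp.1) hexpnn
  have hkerpos : (0:ℝ) < ((2:ℝ)⁻¹) ^ e := Real.rpow_pos_of_pos (by norm_num) _
  set ML : ℝ := Mf ^ 2 / mφ * (2 * Mφ * (2 * Mρ) / ((2:ℝ)⁻¹) ^ e) with hML
  set ME : ℝ := Mρ * ((2 * Mf) ^ 2 / ((2:ℝ)⁻¹) ^ e) with hME
  set M : ℝ := max ML ME with hM
  have hMLnn : 0 ≤ ML := by positivity
  have hMEnn : 0 ≤ ME := by positivity
  have hMnn : 0 ≤ M := le_trans hMLnn (le_max_left _ _)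
  set T : Set (Ed d × Ed d) :=
    closedBall (0 : Ed d) (R + 1) ×ˢ closedBall (0 : Ed d) (R + 1) with hT
  have hTmeas : MeasurableSet T :=
    (measurableSet_closedBall.prod measurableSet_closedBall)
  have hdom : Integrable (T.indicator fun _ => M)
      ((volume : Measure (Ed d)).prod volume) := by
    rw [integrable_indicator_iff hTmeas]
    refine (integrableOn_const_iff).mpr (Or.inr ?_)
    rw [hT, Measure.prod_prod]
    exact ENNReal.mul_lt_top
      (isCompact_closedBall _ _).measure_lt_top (isCompact_closedBall _ _).measure_lt_top
  have hdomnn : ∀ p, 0 ≤ (T.indicator fun _ => M) p := fun p =>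
    Set.indicator_nonneg (fun _ _ => hMnn) p
  -- measurability of the integrands
  have hGLmeas : Measurable FL := by
    have h1 : Continuous fun p : Ed d × Ed d => f p.1 ^ 2 / φ p.1 :=
      ((hfcont.comp continuous_fst).pow 2).div (hφ.comp continuous_fst)
        (fun p => (hφpos p.1).ne')
    have h2 : Continuous fun p : Ed d × Ed d => φ p.1 - φ p.2 :=
      (hφ.comp continuous_fst).sub (hφ.comp continuous_snd)
    have h3 : Measurable fun p : Ed d × Ed d => ρ p.1 + ρ p.2 :=
      (hρmeas.comp measurable_fst).add (hρmeas.comp measurable_snd)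
    have h4 : Continuous fun p : Ed d × Ed d => dist p.1 p.2 ^ e :=
      continuous_dist.rpow_const (fun p => Or.inr hexpnn)
    exact h1.measurable.mul ((h2.measurable.mul h3).div h4.measurable)
  have hGEmeas : Measurable FE := by
    have h1 : Continuous fun p : Ed d × Ed d => (f p.1 - f p.2) ^ 2 :=
      ((hfcont.comp continuous_fst).sub (hfcont.comp continuous_snd)).pow 2
    have h4 : Continuous fun p : Ed d × Ed d => dist p.1 p.2 ^ e :=
      continuous_dist.rpow_const (fun p => Or.inr hexpnn)
    exact (hρmeas.comp measurable_fst).mul (h1.measurable.div h4.measurable)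
  -- bound for FL
  have hGLbound : ∀ p, ‖S.indicator FL p‖ ≤ (T.indicator fun _ => M) p := by
    intro p
    by_cases hp : p ∈ S
    · rw [Set.indicator_of_mem hp]
      by_cases hp1 : p.1 ∈ tsupport f
      · have hp1' : ‖p.1‖ ≤ R + 1 := by
          have := hKR hp1
          simp only [mem_closedBall, dist_zero_right] at this
          linarith
        have hp2' : ‖p.2‖ ≤ R + 1 := by
          have h1 : dist p.2 (0 : Ed d) ≤ dist p.2 p.1 + dist p.1 0 := dist_triangle _ _ _
          have h2 : dist p.1 p.2 ≤ 1 := hp.2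
          have h3 : ‖p.1‖ ≤ R := by
            have := hKR hp1; simpa [mem_closedBall, dist_zero_right] using this
          rw [dist_comm p.2 p.1] at h1
          simp only [dist_zero_right] at h1
          calc ‖p.2‖ ≤ dist p.1 p.2 + ‖p.1‖ := h1
            _ ≤ 1 + R := by linarith
            _ ≤ R + 1 := by linarith
        have hpT : p ∈ T := by
          rw [hT]
          exact ⟨by simpa [mem_closedBall, dist_zero_right] using hp1',
                 by simpa [mem_closedBall, dist_zero_right] using hp2'⟩
        rw [Set.indicator_of_mem hpT]
        have hb1 : |f p.1 ^ 2 / φ p.1| ≤ Mf ^ 2 / mφ := by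
          rw [abs_div, abs_of_nonneg (sq_nonneg _), abs_of_pos (hφpos p.1)]
          refine div_le_div₀ (by positivity) ?_ hmφpos
            (hmφle p.1 (by simpa [mem_closedBall, dist_zero_right] using hp1'))
          have := hMf p.1
          calc f p.1 ^ 2 = |f p.1| ^ 2 := (sq_abs _).symm
            _ ≤ Mf ^ 2 := pow_le_pow_left₀ (abs_nonneg _) this 2
        have hb2 : |(φ p.1 - φ p.2) * (ρ p.1 + ρ p.2) / dist p.1 p.2 ^ e|
            ≤ 2 * Mφ * (2 * Mρ) / ((2:ℝ)⁻¹) ^ e := by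
          rw [abs_div, abs_of_nonneg (Real.rpow_nonneg dist_nonneg _), abs_mul]
          refine div_le_div₀ (by positivity) ?_ hkerpos (hkerlb p hp)
          refine mul_le_mul ?_ ?_ (abs_nonneg _) (by positivity)
          · calc |φ p.1 - φ p.2| ≤ |φ p.1| + |φ p.2| := abs_sub _ _
              _ ≤ Mφ + Mφ := add_le_add
                  (hMφ p.1 (by simpa [mem_closedBall, dist_zero_right] using hp1'))
                  (hMφ p.2 (by simpa [mem_closedBall, dist_zero_right] using hp2'))
              _ = 2 * Mφ := by ring
          · rw [abs_of_nonneg (add_nonneg (hρnn _) (hρnn _))]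
            calc ρ p.1 + ρ p.2 ≤ Mρ + Mρ :=
                add_le_add (hρbound p.1 hp1') (hρbound p.2 hp2')
              _ = 2 * Mρ := by ring
        calc ‖FL p‖ = |f p.1 ^ 2 / φ p.1| * |(φ p.1 - φ p.2) * (ρ p.1 + ρ p.2) / dist p.1 p.2 ^ e| := by
              rw [hFL]; exact abs_mul _ _
          _ ≤ Mf ^ 2 / mφ * (2 * Mφ * (2 * Mρ) / ((2:ℝ)⁻¹) ^ e) :=
              mul_le_mul hb1 hb2 (abs_nonneg _) (by positivity)
          _ = ML := hML.symm
          _ ≤ M := le_max_left _ _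
      · have : FL p = 0 := by
          simp [hFL, image_eq_zero_of_notMem_tsupport hp1]
        rw [this, norm_zero]
        exact hdomnn p
    · rw [Set.indicator_of_notMem hp, norm_zero]
      exact hdomnn p
  -- bound for FE
  have hGEbound : ∀ p, ‖S.indicator FE p‖ ≤ (T.indicator fun _ => M) p := by
    intro p
    by_cases hp : p ∈ S
    · rw [Set.indicator_of_mem hp]
      by_cases hp12 : p.1 ∈ tsupport f ∨ p.2 ∈ tsupport f
      · have hdistle : dist p.1 p.2 ≤ 1 := hp.2
        have hboth : ‖p.1‖ ≤ R + 1 ∧ ‖p.2‖ ≤ R + 1 := by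
          rcases hp12 with h | h
          · have h3 : ‖p.1‖ ≤ R := by
              have := hKR h; simpa [mem_closedBall, dist_zero_right] using this
            constructor
            · linarith
            · have h1 : dist p.2 (0 : Ed d) ≤ dist p.2 p.1 + dist p.1 0 := dist_triangle _ _ _
              rw [dist_comm p.2 p.1] at h1
              simp only [dist_zero_right] at h1
              linarith
          · have h3 : ‖p.2‖ ≤ R := by
              have := hKR h; simpa [mem_closedBall, dist_zero_right] using this
            constructor
            · have h1 : dist p.1 (0 : Ed d) ≤ dist p.1 p.2 + dist p.2 0 := dist_triangle _ _ _
              simp only [dist_zero_right] at h1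
              linarith
            · linarith
        have hpT : p ∈ T := by
          rw [hT]
          exact ⟨by simpa [mem_closedBall, dist_zero_right] using hboth.1,
                 by simpa [mem_closedBall, dist_zero_right] using hboth.2⟩
        rw [Set.indicator_of_mem hpT]
        have hb2 : |(f p.1 - f p.2) ^ 2 / dist p.1 p.2 ^ e|
            ≤ (2 * Mf) ^ 2 / ((2:ℝ)⁻¹) ^ e := by
          rw [abs_div, abs_of_nonneg (Real.rpow_nonneg dist_nonneg _),
            abs_of_nonneg (sq_nonneg _)]
          refine div_le_div₀ (by positivity) ?_ hkerpos (hkerlb p hp)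
          calc (f p.1 - f p.2) ^ 2 = |f p.1 - f p.2| ^ 2 := (sq_abs _).symm
            _ ≤ (2 * Mf) ^ 2 := by
                refine pow_le_pow_left₀ (abs_nonneg _) ?_ 2
                calc |f p.1 - f p.2| ≤ |f p.1| + |f p.2| := abs_sub _ _
                  _ ≤ Mf + Mf := add_le_add (hMf _) (hMf _)
                  _ = 2 * Mf := by ring
        calc ‖FE p‖ = |ρ p.1| * |(f p.1 - f p.2) ^ 2 / dist p.1 p.2 ^ e| := by
              rw [hFE]; exact abs_mul _ _
          _ ≤ Mρ * ((2 * Mf) ^ 2 / ((2:ℝ)⁻¹) ^ e) := by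
              refine mul_le_mul ?_ hb2 (abs_nonneg _) hMρnn
              rw [abs_of_nonneg (hρnn _)]
              exact hρbound p.1 hboth.1
          _ = ME := hME.symm
          _ ≤ M := le_max_right _ _
      · push_neg at hp12
        have : FE p = 0 := by
          simp [hFE, image_eq_zero_of_notMem_tsupport hp12.1,
            image_eq_zero_of_notMem_tsupport hp12.2]
        rw [this, norm_zero]
        exact hdomnn p
    · rw [Set.indicator_of_notMem hp, norm_zero]
      exact hdomnn p
  -- integrability
  have hIntGL : Integrable (S.indicator FL) ((volume : Measure (Ed d)).prod volume) :=
    hdom.mono' (hGLmeas.indicator hSmeas).aestronglyMeasurable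
      (Eventually.of_forall hGLbound)
  have hIntGE : Integrable (S.indicator FE) ((volume : Measure (Ed d)).prod volume) :=
    hdom.mono' (hGEmeas.indicator hSmeas).aestronglyMeasurable
      (Eventually.of_forall hGEbound)
  have hIntGLs : Integrable (fun p => S.indicator FL p.swap)
      ((volume : Measure (Ed d)).prod volume) := hIntGL.swap
  have hIntGEs : Integrable (fun p => S.indicator FE p.swap)
      ((volume : Measure (Ed d)).prod volume) := hIntGE.swap
  have hIntGLu : Integrable (Function.uncurry fun x y => S.indicator FL (x, y))
      ((volume : Measure (Ed d)).prod volume) := by exact hIntGL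
  have hIntGEu : Integrable (Function.uncurry fun x y => S.indicator FE (x, y))
      ((volume : Measure (Ed d)).prod volume) := by exact hIntGE
  -- express the two sides as product integrals
  have hLHS : -(∫ x, f x ^ 2 * (tildeL d α V φ x / φ x) ∂(muV d V))
      = (1/2) * ∫ p, S.indicator FL p ∂((volume : Measure (Ed d)).prod volume) := by
    rw [hμint, ← integral_neg]
    calc ∫ x, -(ρ x * (f x ^ 2 * (tildeL d α V φ x / φ x)))
        = ∫ x, (1/2) * ∫ y, S.indicator FL (x, y) :=
          integral_congr_ae (Eventually.of_forall hAx)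
      _ = (1/2) * ∫ x, ∫ y, S.indicator FL (x, y) := integral_const_mul _ _
      _ = (1/2) * ∫ p, S.indicator FL p ∂((volume : Measure (Ed d)).prod volume) := by
          rw [integral_integral hIntGLu]
  have hRHS : tildeE d α V f
      = (1/2) * ∫ p, S.indicator FE p ∂((volume : Measure (Ed d)).prod volume) := by
    rw [tildeE, hμint]
    congr 1
    calc ∫ x, ρ x * ∫ y in {y : Ed d | 1/2 ≤ dist x y ∧ dist x y ≤ 1},
          (f x - f y) ^ 2 / dist x y ^ ((d:ℝ) + α)
        = ∫ x, ∫ y, S.indicator FE (x, y) := by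
          refine integral_congr_ae (Eventually.of_forall fun x => ?_)
          rw [← he]
          exact hEx x
      _ = ∫ p, S.indicator FE p ∂((volume : Measure (Ed d)).prod volume) :=
          integral_integral hIntGEu
  -- symmetrization
  have hswapGL : ∫ p, S.indicator FL p.swap ∂((volume : Measure (Ed d)).prod volume)
      = ∫ p, S.indicator FL p ∂((volume : Measure (Ed d)).prod volume) :=
    integral_prod_swap (S.indicator FL)
  have hswapGE : ∫ p, S.indicator FE p.swap ∂((volume : Measure (Ed d)).prod volume)
      = ∫ p, S.indicator FE p ∂((volume : Measure (Ed d)).prod volume) :=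
    integral_prod_swap (S.indicator FE)
  -- pointwise inequality
  have hpt : ∀ p : Ed d × Ed d,
      S.indicator FL p + S.indicator FL p.swap ≤ S.indicator FE p + S.indicator FE p.swap := by
    intro p
    by_cases hp : p ∈ S
    · have hps : p.swap ∈ S := (hSswap p).mpr hp
      rw [Set.indicator_of_mem hp, Set.indicator_of_mem hps,
        Set.indicator_of_mem hp, Set.indicator_of_mem hps]
      set a := f p.1
      set b := f p.2
      set P := φ p.1
      set Q := φ p.2
      set u := ρ p.1
      set v := ρ p.2
      have hP : 0 < P := hφpos _
      have hQ : 0 < Q := hφpos _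
      have hu : 0 ≤ u := hρnn _
      have hv : 0 ≤ v := hρnn _
      have hrpos : 0 < dist p.1 p.2 ^ e :=
        lt_of_lt_of_le hkerpos (hkerlb p hp)
      set r := dist p.1 p.2 ^ e with hr
      have hdists : dist p.2 p.1 ^ e = r := by rw [hr, dist_comm]
      have core : a ^ 2 / P * (P - Q) + b ^ 2 / Q * (Q - P) ≤ (a - b) ^ 2 := by
        rw [div_mul_eq_mul_div, div_mul_eq_mul_div, div_add_div _ _ hP.ne' hQ.ne',
          div_le_iff₀ (mul_pos hP hQ)]
        nlinarith [sq_nonneg (a * Q - b * P), sq_nonneg (a - b), mul_pos hP hQ]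
      have hGLval : FL p + FL p.swap
          = (a ^ 2 / P * (P - Q) + b ^ 2 / Q * (Q - P)) * ((u + v) / r) := by
        simp only [hFL, Prod.fst_swap, Prod.snd_swap]
        rw [hdists]
        ring
      have hGEval : FE p + FE p.swap = (a - b) ^ 2 * ((u + v) / r) := by
        simp only [hFE, Prod.fst_swap, Prod.snd_swap]
        rw [hdists]
        ring
      rw [hGLval, hGEval]
      exact mul_le_mul_of_nonneg_right core (by positivity)
    · have hps : p.swap ∉ S := fun h => hp ((hSswap p).mp h)
      rw [Set.indicator_of_notMem hp, Set.indicator_of_notMem hps,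
        Set.indicator_of_notMem hp, Set.indicator_of_notMem hps]
  -- conclude
  have hint : ∫ p, (S.indicator FL p + S.indicator FL p.swap)
        ∂((volume : Measure (Ed d)).prod volume)
      ≤ ∫ p, (S.indicator FE p + S.indicator FE p.swap)
        ∂((volume : Measure (Ed d)).prod volume) :=
    integral_mono (hIntGL.add hIntGLs) (hIntGE.add hIntGEs) hpt
  rw [integral_add hIntGL hIntGLs, integral_add hIntGE hIntGEs, hswapGL, hswapGE] at hint
  rw [hLHS, hRHS]
  linarith
end
end
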